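/- Let k ≥ 3 and let P ⊆ S² be a set of k points in general position, and put P̂ = P ∪ (−P). Then the number of unordered pairs {e, f} of distinct edges of P̂, say e = {a,b} and f = {c,d}, such that arc(a,b) ∩ arc(c,d) contains a point not belonging to {a,b,c,d}, equals (1/4)·k(k−1)(k−2)(k−3). -/

import Mathlib

open Set
open scoped RealInnerProductSpace

noncomputable section

/-- Three-dimensional Euclidean space. -/
abbrev E3 : Type := EuclideanSpace ℝ (Fin 3)

/-- The unit sphere `S²` in `ℝ³`. -/
def unitSphere : Set E3 := {x | ‖x‖ = 1}

/-- The geodesic arc from `p` to `q`: the radial projection onto the sphere of the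
straight segment from `p` to `q`. -/
def arc (p q : E3) : Set E3 :=
  {x | ∃ t ∈ Icc (0 : ℝ) 1, x = ‖(1 - t) • p + t • q‖⁻¹ • ((1 - t) • p + t • q)}

/-- The half-circle with endpoints `p` and `-p` determined by a direction `v`. -/
def halfCircle (p v : E3) : Set E3 :=
  {x | ∃ t ∈ Icc (0 : ℝ) Real.pi, x = Real.cos t • p + Real.sin t • v}

/-- A set of points is in general position if every three distinct points of it are
linearly independent. -/
def GenPos (P : Set E3) : Prop :=
  ∀ a ∈ P, ∀ b ∈ P, ∀ c ∈ P, a ≠ b → a ≠ c → b ≠ c → LinearIndependent ℝ ![a, b, c]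

/-- `P̂ = P ∪ (-P)`: the set `P` together with the antipodes of its points. -/
def phat (P : Set E3) : Set E3 := P ∪ (fun x => -x) '' P

/-- The edges of a vertex set `V`: unordered pairs `{a, b}` of points of `V`
with `b ∉ {a, -a}`. -/
def edges (V : Set E3) : Set (Sym2 E3) :=
  {e | ∃ a b, a ∈ V ∧ b ∈ V ∧ b ≠ a ∧ b ≠ -a ∧ e = s(a, b)}

/-- A curve of a drawing: a subset of the sphere together with its set of endpoints. -/
abbrev Curve : Type := Set E3 × Set E3

/-- The curves of the drawing determined by `P`: the geodesic arcs `arc a b` for all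
edges `{a, b}` of `P̂`, together with the half-circles `halfCircle p (v p)` joining
`p` and `-p` for `p ∈ P'`. -/
def drawingCurves (P : Set E3) (v : E3 → E3) (P' : Set E3) : Set Curve :=
  {c | (∃ a b, a ∈ phat P ∧ b ∈ phat P ∧ b ≠ a ∧ b ≠ -a ∧
          c = (arc a b, ({a, b} : Set E3))) ∨
       (∃ p ∈ P', c = (halfCircle p (v p), ({p, -p} : Set E3)))}

/-- The crossing pairs of a drawing: unordered pairs of distinct curves sharing a point
that is not an endpoint of either curve. -/
def crossingPairs (D : Set Curve) : Set (Sym2 Curve) :=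
  {pr | ∃ c ∈ D, ∃ d ∈ D, c ≠ d ∧
    (∃ x, x ∈ c.1 ∧ x ∈ d.1 ∧ x ∉ c.2 ∧ x ∉ d.2) ∧ pr = s(c, d)}

/-- Hill's number `H(n)` as a rational number. -/
def Hfun (n : ℕ) : ℚ :=
  (1 / 4 : ℚ) * ((n / 2 : ℕ) : ℚ) * (((n - 1) / 2 : ℕ) : ℚ) *
    (((n - 2) / 2 : ℕ) : ℚ) * (((n - 3) / 2 : ℕ) : ℚ)


namespace CrossAux

/-! ### sign -/
def msign (t : ℝ) : ℝ := if 0 < t then 1 else -1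

lemma msign_one_or (t : ℝ) : msign t = 1 ∨ msign t = -1 := by
  unfold msign; split_ifs <;> simp

lemma msign_ne_zero (t : ℝ) : msign t ≠ 0 := by
  rcases msign_one_or t with h | h <;> rw [h] <;> norm_num

lemma msign_sq (t : ℝ) : msign t * msign t = 1 := by
  rcases msign_one_or t with h | h <;> rw [h] <;> norm_num

lemma msign_mul_abs (t : ℝ) : msign t * |t| = t := by
  unfold msign; split_ifs with h
  · rw [one_mul, abs_of_pos h]
  · rw [neg_one_mul, abs_of_nonpos (not_lt.1 h), neg_neg]

lemma sign_extract {u ε t : ℝ} (hu : 0 < u) (hε : ε = 1 ∨ ε = -1) (h : u * ε = t) :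
    ε = msign t := by
  rcases hε with rfl | rfl <;> subst h <;> unfold msign
  · rw [if_pos (by linarith)]
  · rw [if_neg (by intro hc; nlinarith)]

lemma msign_neg {t : ℝ} (h : t ≠ 0) : msign (-t) = -msign t := by
  rcases h.lt_or_gt with h' | h' <;> unfold msign
  · rw [if_pos (by linarith), if_neg (by linarith)]; norm_num
  · rw [if_neg (by linarith), if_pos h']

lemma msign_mul {a b : ℝ} (ha : a ≠ 0) (hb : b ≠ 0) :
    msign (a * b) = msign a * msign b := by
  rcases ha.lt_or_gt with h1 | h1 <;> rcases hb.lt_or_gt with h2 | h2 <;> unfold msign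
  · rw [if_pos (mul_pos_of_neg_of_neg h1 h2), if_neg (by linarith), if_neg (by linarith)]; norm_num
  · rw [if_neg (by nlinarith), if_neg (by linarith), if_pos h2]; norm_num
  · rw [if_neg (by nlinarith), if_pos h1, if_neg (by linarith)]; norm_num
  · rw [if_pos (mul_pos h1 h2), if_pos h1, if_pos h2]; norm_num

/-! ### det3 -/
def det3 (a b c : E3) : ℝ :=
  a 0 * (b 1 * c 2 - b 2 * c 1) - a 1 * (b 0 * c 2 - b 2 * c 0) + a 2 * (b 0 * c 1 - b 1 * c 0)

lemma det3_ne_zero {a b c : E3} (h : LinearIndependent ℝ ![a, b, c]) : det3 a b c ≠ 0 := by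
  have h2 : LinearIndependent ℝ (Matrix.of ![a.ofLp,b.ofLp,c.ofLp] : Matrix (Fin 3) (Fin 3) ℝ).row := by
    have := h.map' (WithLp.linearEquiv 2 ℝ (Fin 3 → ℝ)).toLinearMap (LinearEquiv.ker _)
    convert this using 1
    · ext i j; fin_cases i <;> rfl
    · rfl
    · rfl
  rw [Matrix.linearIndependent_rows_iff_isUnit, Matrix.isUnit_iff_isUnit_det] at h2
  have h3 := h2.ne_zero
  rw [Matrix.det_fin_three] at h3
  simp only [Matrix.of_apply, Matrix.cons_val', Matrix.cons_val_zero, Matrix.cons_val_one,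
    Matrix.head_cons, Matrix.cons_val_fin_one, Matrix.empty_val', Matrix.cons_val_two,
    Matrix.tail_cons, Matrix.head_fin_const] at h3
  intro hd
  apply h3
  rw [det3] at hd
  linarith

lemma li3 {a b c : E3} (h : LinearIndependent ℝ ![a, b, c]) {A B C : ℝ}
    (hs : A • a + B • b + C • c = 0) : A = 0 ∧ B = 0 ∧ C = 0 := by
  rw [Fintype.linearIndependent_iff] at h
  have := h ![A, B, C] (by simpa [Fin.sum_univ_three] using hs)
  exact ⟨this 0, this 1, this 2⟩

/-! ### arc lemmas -/
lemma exists_coords_of_mem_arc {a b y : E3}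
    (hrel : ∀ u v : ℝ, u • a + v • b = 0 → u = 0 ∧ v = 0) (hy : y ∈ arc a b) :
    ∃ u v : ℝ, 0 ≤ u ∧ 0 ≤ v ∧ ¬(u = 0 ∧ v = 0) ∧ y = u • a + v • b ∧ ‖y‖ = 1 := by
  obtain ⟨t, ⟨ht0, ht1⟩, rfl⟩ := hy
  set w := (1-t) • a + t • b with hw
  have hwne : w ≠ 0 := by
    intro h
    obtain ⟨h1, h2⟩ := hrel _ _ h
    linarith
  have hnw : 0 < ‖w‖ := norm_pos_iff.2 hwne
  have hinv : (0:ℝ) < ‖w‖⁻¹ := by positivity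
  refine ⟨‖w‖⁻¹ * (1-t), ‖w‖⁻¹ * t, mul_nonneg hinv.le (by linarith), mul_nonneg hinv.le ht0, ?_, ?_, ?_⟩
  · rintro ⟨h1, h2⟩
    have : (1:ℝ) - t = 0 := by
      rcases mul_eq_zero.1 h1 with h | h
      · exact absurd h hinv.ne'
      · exact h
    have ht' : t = 0 := by
      rcases mul_eq_zero.1 h2 with h | h
      · exact absurd h hinv.ne'
      · exact h
    rw [ht'] at this; linarith
  · rw [smul_add, smul_smul, smul_smul]
  · rw [norm_smul, Real.norm_eq_abs, abs_of_pos hinv, inv_mul_cancel₀ hnw.ne']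

lemma mem_arc_of_coords {a b : E3} {u v : ℝ} (hu : 0 ≤ u) (hv : 0 ≤ v)
    (hn : ‖u • a + v • b‖ = 1) : u • a + v • b ∈ arc a b := by
  have hne : ¬(u = 0 ∧ v = 0) := by
    rintro ⟨rfl, rfl⟩
    simp at hn
  have hsum : 0 < u + v := by
    rcases hu.lt_or_eq with h | h
    · linarith
    · rcases hv.lt_or_eq with h' | h'
      · linarith
      · exact absurd ⟨h.symm, h'.symm⟩ hne
  refine ⟨v / (u+v), ⟨by positivity, by rw [div_le_one hsum]; linarith⟩, ?_⟩
  have h1 : (1 - v/(u+v)) • a + (v/(u+v)) • b = (u+v)⁻¹ • (u • a + v • b) := by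
    match_scalars <;> field_simp <;> ring
  rw [h1, norm_smul, hn, mul_one, Real.norm_eq_abs, abs_of_pos (inv_pos.2 hsum), inv_inv,
    smul_smul, mul_inv_cancel₀ hsum.ne', one_smul]

lemma arc_comm (a b : E3) : arc a b = arc b a := by
  have key : ∀ x y : E3, arc x y ⊆ arc y x := by
    rintro x y z ⟨t, ⟨ht0, ht1⟩, rfl⟩
    refine ⟨1 - t, ⟨by linarith, by linarith⟩, ?_⟩
    have h : (1 - (1-t)) • y + (1-t) • x = (1-t) • x + t • y := by
      rw [show (1 - (1-t)) = t by ring]; exact add_comm _ _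
    rw [h]
  exact le_antisymm (key a b) (key b a)

/-! ### the intersection direction of two great circles -/

def cA (p q r s : E3) : ℝ := -det3 r s q
def cB (p q r s : E3) : ℝ := det3 r s p
def cC (p q r s : E3) : ℝ := det3 p q s
def cD (p q r s : E3) : ℝ := -det3 p q r
def Xv (p q r s : E3) : E3 := cC p q r s • r + cD p q r s • s

lemma Xv_eq (p q r s : E3) : Xv p q r s = cA p q r s • p + cB p q r s • q := by
  ext i
  simp only [Xv, cA, cB, cC, cD, PiLp.add_apply, PiLp.smul_apply, smul_eq_mul, det3]
  fin_cases i <;>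
  · simp only [Fin.zero_eta, Fin.mk_one, Fin.reduceFinMk]
    ring

lemma cA_eq (p q r s : E3) : cA p q r s = -det3 q r s := by simp only [cA, det3]; ring
lemma cB_eq (p q r s : E3) : cB p q r s = det3 p r s := by simp only [cB, det3]; ring

lemma cA_ne {p q r s : E3} (L : LinearIndependent ℝ ![q, r, s]) : cA p q r s ≠ 0 := by
  rw [cA_eq]; exact neg_ne_zero.2 (det3_ne_zero L)
lemma cB_ne {p q r s : E3} (L : LinearIndependent ℝ ![p, r, s]) : cB p q r s ≠ 0 := by
  rw [cB_eq]; exact det3_ne_zero L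
lemma cC_ne {p q r s : E3} (L : LinearIndependent ℝ ![p, q, s]) : cC p q r s ≠ 0 :=
  det3_ne_zero L
lemma cD_ne {p q r s : E3} (L : LinearIndependent ℝ ![p, q, r]) : cD p q r s ≠ 0 :=
  neg_ne_zero.2 (det3_ne_zero L)

lemma Xv_ne_zero {p q r s : E3} (L2 : LinearIndependent ℝ ![p, r, s])
    (L3 : LinearIndependent ℝ ![p, q, s]) : Xv p q r s ≠ 0 := by
  intro h
  have h2 : (0:ℝ) • p + cC p q r s • r + cD p q r s • s = 0 := by
    rw [zero_smul, zero_add]; exact h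
  exact cC_ne L3 (li3 L2 h2).2.1

/-- any linear relation among `p,q,r,s` is proportional to the canonical one -/
lemma rel_classify {p q r s : E3}
    (L1 : LinearIndependent ℝ ![q, r, s])
    {A B C D : ℝ} (h : A • p + B • q + C • r + D • s = 0)
    (hA1 : cA p q r s ≠ 0) :
    ∃ c : ℝ, A = c * cA p q r s ∧ B = c * cB p q r s ∧
      C = -(c * cC p q r s) ∧ D = -(c * cD p q r s) := by
  set a1 := cA p q r s
  set b1 := cB p q r s
  set c1 := cC p q r s
  set d1 := cD p q r s
  set c := A / a1 with hc
  have hAc : A = c * a1 := by rw [hc, div_mul_cancel₀ A hA1]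
  have hX : Xv p q r s = a1 • p + b1 • q := Xv_eq p q r s
  have hX2 : Xv p q r s = c1 • r + d1 • s := rfl
  have key : (B - c * b1) • q + (C + c * c1) • r + (D + c * d1) • s = 0 := by
    have expand : (B - c * b1) • q + (C + c * c1) • r + (D + c * d1) • s
        = (A • p + B • q + C • r + D • s) + c • (c1 • r + d1 • s)
          - c • (a1 • p + b1 • q) + (c * a1 - A) • p := by module
    rw [expand, h, ← hX2, hX, ← hAc]
    simp
  obtain ⟨h1, h2, h3⟩ := li3 L1 key
  exact ⟨c, hAc, by linarith, by linarith, by linarith⟩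

/-- Every common point of two arcs over four independent classes is one of the two
normalized intersection points, with matching signs. -/
lemma cross_classify {p q r s : E3}
    (L1 : LinearIndependent ℝ ![q, r, s]) (L2 : LinearIndependent ℝ ![p, r, s])
    (L3 : LinearIndependent ℝ ![p, q, s]) (L4 : LinearIndependent ℝ ![p, q, r])
    {ε δ ε' δ' : ℝ} (hε : ε = 1 ∨ ε = -1) (hδ : δ = 1 ∨ δ = -1)
    (hε' : ε' = 1 ∨ ε' = -1) (hδ' : δ' = 1 ∨ δ' = -1) {y : E3}
    (h1 : y ∈ arc (ε • p) (δ • q)) (h2 : y ∈ arc (ε' • r) (δ' • s)) :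
    ∃ σ : ℝ, (σ = 1 ∨ σ = -1) ∧ ε = σ * msign (cA p q r s) ∧ δ = σ * msign (cB p q r s) ∧
      ε' = σ * msign (cC p q r s) ∧ δ' = σ * msign (cD p q r s) ∧
      y = (σ * ‖Xv p q r s‖⁻¹) • Xv p q r s := by
  have hεne : ε ≠ 0 := by rcases hε with rfl | rfl <;> norm_num
  have hδne : δ ≠ 0 := by rcases hδ with rfl | rfl <;> norm_num
  have hε'ne : ε' ≠ 0 := by rcases hε' with rfl | rfl <;> norm_num
  have hδ'ne : δ' ≠ 0 := by rcases hδ' with rfl | rfl <;> norm_num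
  have hA1 := cA_ne (p := p) L1
  have hB1 := cB_ne (q := q) L2
  have hC1 := cC_ne (r := r) L3
  have hD1 := cD_ne (s := s) L4
  -- coordinates
  have hrelpq : ∀ u v : ℝ, u • (ε • p) + v • (δ • q) = 0 → u = 0 ∧ v = 0 := by
    intro u v h
    have h' : (u * ε) • p + (v * δ) • q + (0:ℝ) • s = 0 := by
      rw [zero_smul, add_zero, ← smul_smul, ← smul_smul]; exact h
    obtain ⟨hh1, hh2, _⟩ := li3 L3 h'
    exact ⟨by rcases mul_eq_zero.1 hh1 with h | h; exact h; exact absurd h hεne,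
           by rcases mul_eq_zero.1 hh2 with h | h; exact h; exact absurd h hδne⟩
  have hrelrs : ∀ u v : ℝ, u • (ε' • r) + v • (δ' • s) = 0 → u = 0 ∧ v = 0 := by
    intro u v h
    have h' : (0:ℝ) • p + (u * ε') • r + (v * δ') • s = 0 := by
      rw [zero_smul, zero_add, ← smul_smul, ← smul_smul]; exact h
    obtain ⟨_, hh1, hh2⟩ := li3 L2 h'
    exact ⟨by rcases mul_eq_zero.1 hh1 with h | h; exact h; exact absurd h hε'ne,
           by rcases mul_eq_zero.1 hh2 with h | h; exact h; exact absurd h hδ'ne⟩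
  obtain ⟨u, v, hu, hv, huv, hyuv, hynorm⟩ := exists_coords_of_mem_arc hrelpq h1
  obtain ⟨u', v', hu', hv', huv', hyuv', _⟩ := exists_coords_of_mem_arc hrelrs h2
  have hrel4 : (u * ε) • p + (v * δ) • q + (-(u' * ε')) • r + (-(v' * δ')) • s = 0 := by
    have hz : u • (ε • p) + v • (δ • q) - (u' • (ε' • r) + v' • (δ' • s)) = 0 := by
      rw [← hyuv, ← hyuv']; simp
    have e2 : (u * ε) • p + (v * δ) • q + (-(u' * ε')) • r + (-(v' * δ')) • s
        = u • (ε • p) + v • (δ • q) - (u' • (ε' • r) + v' • (δ' • s)) := by module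
    rw [e2, hz]
  obtain ⟨c, hc1, hc2, hc3, hc4⟩ := rel_classify L1 hrel4 hA1
  have hc3' : u' * ε' = c * cC p q r s := by linarith
  have hc4' : v' * δ' = c * cD p q r s := by linarith
  have hcne : c ≠ 0 := by
    rintro rfl
    rw [zero_mul] at hc1 hc2
    refine huv ⟨?_, ?_⟩
    · rcases mul_eq_zero.1 hc1 with h | h; exact h; exact absurd h hεne
    · rcases mul_eq_zero.1 hc2 with h | h; exact h; exact absurd h hδne
  have hupos : 0 < u := by
    rcases hu.lt_or_eq with h | h; exact h
    exfalso; rw [← h, zero_mul] at hc1; exact mul_ne_zero hcne hA1 hc1.symm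
  have hvpos : 0 < v := by
    rcases hv.lt_or_eq with h | h; exact h
    exfalso; rw [← h, zero_mul] at hc2; exact mul_ne_zero hcne hB1 hc2.symm
  have hu'pos : 0 < u' := by
    rcases hu'.lt_or_eq with h | h; exact h
    exfalso; rw [← h, zero_mul] at hc3'; exact mul_ne_zero hcne hC1 hc3'.symm
  have hv'pos : 0 < v' := by
    rcases hv'.lt_or_eq with h | h; exact h
    exfalso; rw [← h, zero_mul] at hc4'; exact mul_ne_zero hcne hD1 hc4'.symm
  -- sign equations
  have hsε : ε = msign c * msign (cA p q r s) := by
    rw [← msign_mul hcne hA1]; exact sign_extract hupos hε hc1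
  have hsδ : δ = msign c * msign (cB p q r s) := by
    rw [← msign_mul hcne hB1]; exact sign_extract hvpos hδ hc2
  have hsε' : ε' = msign c * msign (cC p q r s) := by
    rw [← msign_mul hcne hC1]; exact sign_extract hu'pos hε' hc3'
  have hsδ' : δ' = msign c * msign (cD p q r s) := by
    rw [← msign_mul hcne hD1]; exact sign_extract hv'pos hδ' hc4'
  -- y = c • Xv
  have hyX : y = c • Xv p q r s := by
    have e3 : u • (ε • p) + v • (δ • q) = (u * ε) • p + (v * δ) • q := by module
    rw [hyuv, e3, hc1, hc2, Xv_eq]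
    module
  have hXne : Xv p q r s ≠ 0 := Xv_ne_zero L2 L3
  have hXnorm : (0:ℝ) < ‖Xv p q r s‖ := norm_pos_iff.2 hXne
  have habs : |c| = ‖Xv p q r s‖⁻¹ := by
    rw [hyX, norm_smul, Real.norm_eq_abs] at hynorm
    field_simp at hynorm ⊢
    linarith
  refine ⟨msign c, msign_one_or c, hsε, hsδ, hsε', hsδ', ?_⟩
  rw [hyX, ← habs]
  rw [msign_mul_abs]

lemma msign_mul_self {α : ℝ} : msign α * α = |α| := by
  calc msign α * α = msign α * (msign α * |α|) := by rw [msign_mul_abs]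
    _ = (msign α * msign α) * |α| := by ring
    _ = |α| := by rw [msign_sq, one_mul]

lemma normalized_mem {a b : E3} {α β : ℝ}
    {X : E3} (hX : X = α • a + β • b) (hXne : X ≠ 0)
    {σ : ℝ} (hσ : σ = 1 ∨ σ = -1) :
    (σ * ‖X‖⁻¹) • X ∈ arc ((σ * msign α) • a) ((σ * msign β) • b) := by
  have hXn : (0:ℝ) < ‖X‖ := norm_pos_iff.2 hXne
  set u : ℝ := ‖X‖⁻¹ * (msign α * α) with hu
  set v : ℝ := ‖X‖⁻¹ * (msign β * β) with hv
  have hupos : 0 ≤ u := by rw [hu, msign_mul_self]; positivity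
  have hvpos : 0 ≤ v := by rw [hv, msign_mul_self]; positivity
  have hsc1 : u * (σ * msign α) = σ * ‖X‖⁻¹ * α := by
    calc u * (σ * msign α) = σ * ‖X‖⁻¹ * α * (msign α * msign α) := by rw [hu]; ring
      _ = σ * ‖X‖⁻¹ * α := by rw [msign_sq, mul_one]
  have hsc2 : v * (σ * msign β) = σ * ‖X‖⁻¹ * β := by
    calc v * (σ * msign β) = σ * ‖X‖⁻¹ * β * (msign β * msign β) := by rw [hv]; ring
      _ = σ * ‖X‖⁻¹ * β := by rw [msign_sq, mul_one]
  have heq : u • ((σ * msign α) • a) + v • ((σ * msign β) • b) = (σ * ‖X‖⁻¹) • X := by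
    rw [smul_smul, smul_smul, hsc1, hsc2, hX]
    module
  have hn : ‖u • ((σ * msign α) • a) + v • ((σ * msign β) • b)‖ = 1 := by
    rw [heq, norm_smul, Real.norm_eq_abs, abs_mul]
    have hs1 : |σ| = 1 := by rcases hσ with rfl | rfl <;> norm_num
    rw [hs1, one_mul, abs_of_pos (inv_pos.2 hXn), inv_mul_cancel₀ hXn.ne']
  have := mem_arc_of_coords hupos hvpos hn
  rwa [heq] at this

lemma xhat_ne_pt {a b : E3} {α β : ℝ} (hβ : β ≠ 0)
    (hrel : ∀ u v : ℝ, u • a + v • b = 0 → u = 0 ∧ v = 0)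
    {X : E3} (hX : X = α • a + β • b) (hXne : X ≠ 0) {σ : ℝ} (hσ : σ ≠ 0) (τ : ℝ) :
    (σ * ‖X‖⁻¹) • X ≠ τ • a := by
  have hXn : (0:ℝ) < ‖X‖ := norm_pos_iff.2 hXne
  intro h
  have h2 : (σ * ‖X‖⁻¹ * α - τ) • a + (σ * ‖X‖⁻¹ * β) • b = (σ * ‖X‖⁻¹) • X - τ • a := by
    rw [hX]; module
  rw [h, sub_self] at h2
  have h3 := (hrel _ _ h2).2
  have h4 : σ * ‖X‖⁻¹ * β ≠ 0 := by
    apply mul_ne_zero (mul_ne_zero hσ _) hβ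
    positivity
  exact h4 h3

lemma shared_two {p q : E3} (hp : ‖p‖ = 1) (hq : ‖q‖ = 1)
    (hrel : ∀ u v : ℝ, u • p + v • q = 0 → u = 0 ∧ v = 0)
    {ε δ ε' δ' : ℝ} (hε : ε = 1 ∨ ε = -1) (hδ : δ = 1 ∨ δ = -1)
    (hε' : ε' = 1 ∨ ε' = -1) (hδ' : δ' = 1 ∨ δ' = -1) {y : E3}
    (h1 : y ∈ arc (ε • p) (δ • q)) (h2 : y ∈ arc (ε' • p) (δ' • q))
    (hedge : s(ε • p, δ • q) ≠ s(ε' • p, δ' • q)) :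
    y = ε • p ∨ y = δ • q ∨ y = ε' • p ∨ y = δ' • q := by
  have hεne : ε ≠ 0 := by rcases hε with rfl | rfl <;> norm_num
  have hδne : δ ≠ 0 := by rcases hδ with rfl | rfl <;> norm_num
  have hε'ne : ε' ≠ 0 := by rcases hε' with rfl | rfl <;> norm_num
  have hδ'ne : δ' ≠ 0 := by rcases hδ' with rfl | rfl <;> norm_num
  have mkrel : ∀ (e d : ℝ), e ≠ 0 → d ≠ 0 →
      ∀ u v : ℝ, u • (e • p) + v • (d • q) = 0 → u = 0 ∧ v = 0 := by
    intro e d he hd u v h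
    have h' : (u * e) • p + (v * d) • q = 0 := by
      rw [← smul_smul, ← smul_smul]; exact h
    obtain ⟨hh1, hh2⟩ := hrel _ _ h'
    constructor
    · rcases mul_eq_zero.1 hh1 with h | h
      · exact h
      · exact absurd h he
    · rcases mul_eq_zero.1 hh2 with h | h
      · exact h
      · exact absurd h hd
  obtain ⟨u, v, hu, hv, huv, hyuv, hynorm⟩ := exists_coords_of_mem_arc (mkrel ε δ hεne hδne) h1
  obtain ⟨u', v', hu', hv', huv', hyuv', _⟩ :=
    exists_coords_of_mem_arc (mkrel ε' δ' hε'ne hδ'ne) h2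
  have hcoord : u * ε = u' * ε' ∧ v * δ = v' * δ' := by
    have hz : (u * ε - u' * ε') • p + (v * δ - v' * δ') • q = 0 := by
      have e2 : (u * ε - u' * ε') • p + (v * δ - v' * δ') • q
          = (u • (ε • p) + v • (δ • q)) - (u' • (ε' • p) + v' • (δ' • q)) := by module
      rw [e2, ← hyuv, ← hyuv']; simp
    obtain ⟨hh1, hh2⟩ := hrel _ _ hz
    constructor <;> linarith
  rcases hu.lt_or_eq with hupos | hu0
  · rcases hv.lt_or_eq with hvpos | hv0
    · -- both positive: the two edges coincide, contradiction
      exfalso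
      have hu'pos : 0 < u' := by
        rcases hu'.lt_or_eq with h | h
        · exact h
        · exfalso
          have h0 : u * ε = 0 := by rw [hcoord.1, ← h, zero_mul]
          rcases mul_eq_zero.1 h0 with h2 | h2
          · linarith
          · exact hεne h2
      have hv'pos : 0 < v' := by
        rcases hv'.lt_or_eq with h | h
        · exact h
        · exfalso
          have h0 : v * δ = 0 := by rw [hcoord.2, ← h, zero_mul]
          rcases mul_eq_zero.1 h0 with h2 | h2
          · linarith
          · exact hδne h2
      have he1 : ε = msign (u * ε) := sign_extract hupos hε rfl
      have he2 : ε' = msign (u * ε) := by rw [hcoord.1]; exact sign_extract hu'pos hε' rfl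
      have hd1 : δ = msign (v * δ) := sign_extract hvpos hδ rfl
      have hd2 : δ' = msign (v * δ) := by rw [hcoord.2]; exact sign_extract hv'pos hδ' rfl
      exact hedge (by rw [he1, ← he2, hd1, ← hd2])
    · -- v = 0 : y = ε • p
      left
      have hy2 : y = u • (ε • p) := by rw [hyuv, ← hv0, zero_smul, add_zero]
      have hεabs : |ε| = 1 := by rcases hε with rfl | rfl <;> norm_num
      have hn : ‖y‖ = u := by
        rw [hy2, norm_smul, norm_smul, Real.norm_eq_abs, Real.norm_eq_abs, hp, mul_one,
          hεabs, mul_one, abs_of_pos hupos]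
      have hu1 : u = 1 := by rw [← hn, hynorm]
      rw [hy2, hu1, one_smul]
  · -- u = 0 : y = δ • q
    right; left
    have hvpos : 0 < v := by
      rcases hv.lt_or_eq with h | h
      · exact h
      · exact absurd ⟨hu0.symm, h.symm⟩ huv
    have hy2 : y = v • (δ • q) := by rw [hyuv, ← hu0, zero_smul, zero_add]
    have hδabs : |δ| = 1 := by rcases hδ with rfl | rfl <;> norm_num
    have hn : ‖y‖ = v := by
      rw [hy2, norm_smul, norm_smul, Real.norm_eq_abs, Real.norm_eq_abs, hq, mul_one,
        hδabs, mul_one, abs_of_pos hvpos]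
    have hv1 : v = 1 := by rw [← hn, hynorm]
    rw [hy2, hv1, one_smul]

lemma shared_one {p q r : E3} (hp : ‖p‖ = 1)
    (hrel3 : ∀ A B C : ℝ, A • p + B • q + C • r = 0 → A = 0 ∧ B = 0 ∧ C = 0)
    {ε δ ε' δ' : ℝ} (hε : ε = 1 ∨ ε = -1) (hδ : δ = 1 ∨ δ = -1)
    (hε' : ε' = 1 ∨ ε' = -1) (hδ' : δ' = 1 ∨ δ' = -1) {y : E3}
    (h1 : y ∈ arc (ε • p) (δ • q)) (h2 : y ∈ arc (ε' • p) (δ' • r)) :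
    y = ε • p := by
  have hεne : ε ≠ 0 := by rcases hε with rfl | rfl <;> norm_num
  have hδne : δ ≠ 0 := by rcases hδ with rfl | rfl <;> norm_num
  have hε'ne : ε' ≠ 0 := by rcases hε' with rfl | rfl <;> norm_num
  have hδ'ne : δ' ≠ 0 := by rcases hδ' with rfl | rfl <;> norm_num
  have hrelpq : ∀ u v : ℝ, u • (ε • p) + v • (δ • q) = 0 → u = 0 ∧ v = 0 := by
    intro u v h
    have h' : (u * ε) • p + (v * δ) • q + (0:ℝ) • r = 0 := by
      rw [zero_smul, add_zero, ← smul_smul, ← smul_smul]; exact h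
    obtain ⟨hh1, hh2, _⟩ := hrel3 _ _ _ h'
    constructor
    · rcases mul_eq_zero.1 hh1 with h | h
      · exact h
      · exact absurd h hεne
    · rcases mul_eq_zero.1 hh2 with h | h
      · exact h
      · exact absurd h hδne
  have hrelpr : ∀ u v : ℝ, u • (ε' • p) + v • (δ' • r) = 0 → u = 0 ∧ v = 0 := by
    intro u v h
    have e : (u * ε') • p + (0:ℝ) • q + (v * δ') • r = u • (ε' • p) + v • (δ' • r) := by
      module
    have h' : (u * ε') • p + (0:ℝ) • q + (v * δ') • r = 0 := by rw [e, h]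
    obtain ⟨hh1, _, hh2⟩ := hrel3 _ _ _ h'
    constructor
    · rcases mul_eq_zero.1 hh1 with h | h
      · exact h
      · exact absurd h hε'ne
    · rcases mul_eq_zero.1 hh2 with h | h
      · exact h
      · exact absurd h hδ'ne
  obtain ⟨u, v, hu, hv, huv, hyuv, hynorm⟩ := exists_coords_of_mem_arc hrelpq h1
  obtain ⟨u', v', hu', hv', huv', hyuv', _⟩ := exists_coords_of_mem_arc hrelpr h2
  have hz : (u * ε - u' * ε') • p + (v * δ) • q + (-(v' * δ')) • r = 0 := by
    have e2 : (u * ε - u' * ε') • p + (v * δ) • q + (-(v' * δ')) • r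
        = (u • (ε • p) + v • (δ • q)) - (u' • (ε' • p) + v' • (δ' • r)) := by module
    rw [e2, ← hyuv, ← hyuv']
    simp
  obtain ⟨hh1, hh2, hh3⟩ := hrel3 _ _ _ hz
  have hv0 : v = 0 := by
    rcases mul_eq_zero.1 hh2 with h | h
    · exact h
    · exact absurd h hδne
  have hupos : 0 < u := by
    rcases hu.lt_or_eq with h | h
    · exact h
    · exact absurd ⟨h.symm, hv0⟩ huv
  have hy2 : y = u • (ε • p) := by rw [hyuv, hv0, zero_smul, add_zero]
  have hεabs : |ε| = 1 := by rcases hε with rfl | rfl <;> norm_num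
  have hn : ‖y‖ = u := by
    rw [hy2, norm_smul, norm_smul, Real.norm_eq_abs, Real.norm_eq_abs, hp, mul_one,
      hεabs, mul_one, abs_of_pos hupos]
  have hu1 : u = 1 := by rw [← hn, hynorm]
  rw [hy2, hu1, one_smul]

def Phi4 (p q r s : E3) : Sym2 (Sym2 E3) :=
  s(s(msign (cA p q r s) • p, msign (cB p q r s) • q),
    s(msign (cC p q r s) • r, msign (cD p q r s) • s))

lemma cA_t2 (p q r s : E3) : cA q p s r = cB p q r s := by simp only [cA, cB, det3]; try ring
lemma cB_t2 (p q r s : E3) : cB q p s r = cA p q r s := by simp only [cA, cB, det3]; try ring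
lemma cC_t2 (p q r s : E3) : cC q p s r = cD p q r s := by simp only [cC, cD, det3]; try ring
lemma cD_t2 (p q r s : E3) : cD q p s r = cC p q r s := by simp only [cC, cD, det3]; try ring
lemma cA_t3 (p q r s : E3) : cA r s q p = cC p q r s := by simp only [cA, cC, det3]; try ring
lemma cB_t3 (p q r s : E3) : cB r s q p = cD p q r s := by simp only [cB, cD, det3]; try ring
lemma cC_t3 (p q r s : E3) : cC r s q p = cB p q r s := by simp only [cC, cB, det3]; try ring
lemma cD_t3 (p q r s : E3) : cD r s q p = cA p q r s := by simp only [cD, cA, det3]; try ring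
lemma cA_t4 (p q r s : E3) : cA s r p q = cD p q r s := by simp only [cA, cD, det3]; try ring
lemma cB_t4 (p q r s : E3) : cB s r p q = cC p q r s := by simp only [cB, cC, det3]; try ring
lemma cC_t4 (p q r s : E3) : cC s r p q = cA p q r s := by simp only [cC, cA, det3]; try ring
lemma cD_t4 (p q r s : E3) : cD s r p q = cB p q r s := by simp only [cD, cB, det3]; try ring
lemma cA_n (p q r s : E3) : cA q p r s = -cB p q r s := by simp only [cA, cB, det3]; try ring
lemma cB_n (p q r s : E3) : cB q p r s = -cA p q r s := by simp only [cA, cB, det3]; try ring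
lemma cC_n (p q r s : E3) : cC q p r s = -cC p q r s := by simp only [cC, det3]; try ring
lemma cD_n (p q r s : E3) : cD q p r s = -cD p q r s := by simp only [cD, det3]; try ring

lemma Phi4_t2 (p q r s : E3) : Phi4 q p s r = Phi4 p q r s := by
  unfold Phi4
  rw [cA_t2 p q r s, cB_t2 p q r s, cC_t2 p q r s, cD_t2 p q r s]
  rw [show s(msign (cB p q r s) • q, msign (cA p q r s) • p)
      = s(msign (cA p q r s) • p, msign (cB p q r s) • q) from Sym2.eq_swap,
    show s(msign (cD p q r s) • s, msign (cC p q r s) • r)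
      = s(msign (cC p q r s) • r, msign (cD p q r s) • s) from Sym2.eq_swap]

lemma Phi4_t3 (p q r s : E3) : Phi4 r s q p = Phi4 p q r s := by
  unfold Phi4
  rw [cA_t3 p q r s, cB_t3 p q r s, cC_t3 p q r s, cD_t3 p q r s]
  rw [show s(msign (cB p q r s) • q, msign (cA p q r s) • p)
      = s(msign (cA p q r s) • p, msign (cB p q r s) • q) from Sym2.eq_swap]
  exact Sym2.eq_swap

lemma Phi4_t4 (p q r s : E3) : Phi4 s r p q = Phi4 p q r s := by
  unfold Phi4
  rw [cA_t4 p q r s, cB_t4 p q r s, cC_t4 p q r s, cD_t4 p q r s]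
  rw [show s(msign (cD p q r s) • s, msign (cC p q r s) • r)
      = s(msign (cC p q r s) • r, msign (cD p q r s) • s) from Sym2.eq_swap]
  exact Sym2.eq_swap

lemma Phi4_neg {p q r s : E3} (hA : cA p q r s ≠ 0) (hB : cB p q r s ≠ 0)
    (hC : cC p q r s ≠ 0) (hD : cD p q r s ≠ 0) :
    Phi4 q p r s = s(s((-msign (cA p q r s)) • p, (-msign (cB p q r s)) • q),
      s((-msign (cC p q r s)) • r, (-msign (cD p q r s)) • s)) := by
  unfold Phi4
  rw [cA_n p q r s, cB_n p q r s, cC_n p q r s, cD_n p q r s,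
    msign_neg hB, msign_neg hA, msign_neg hC, msign_neg hD]
  rw [show s((-msign (cB p q r s)) • q, (-msign (cA p q r s)) • p)
      = s((-msign (cA p q r s)) • p, (-msign (cB p q r s)) • q) from Sym2.eq_swap]

/-! ### general position consequences -/

lemma neg_pm {t : ℝ} (h : t = 1 ∨ t = -1) : -t = 1 ∨ -t = -1 := by
  rcases h with rfl | rfl
  · right; norm_num
  · left; norm_num

lemma hrel2_of {P : Set E3} (hgen : GenPos P) (hthird : ∀ a b : E3, ∃ r ∈ P, r ≠ a ∧ r ≠ b) :
    ∀ p ∈ P, ∀ q ∈ P, p ≠ q → ∀ u v : ℝ, u • p + v • q = 0 → u = 0 ∧ v = 0 := by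
  intro p hp q hq hpq u v h
  obtain ⟨r, hr, hrp, hrq⟩ := hthird p q
  have L := hgen p hp q hq r hr hpq (Ne.symm hrp) (Ne.symm hrq)
  have h' : u • p + v • q + (0:ℝ) • r = 0 := by rw [zero_smul, add_zero]; exact h
  obtain ⟨h1, h2, _⟩ := li3 L h'
  exact ⟨h1, h2⟩

lemma pt_ne_zero {P : Set E3} (hunit : ∀ p ∈ P, ‖p‖ = 1) {p : E3} (hp : p ∈ P) : p ≠ 0 := by
  intro h
  have := hunit p hp
  rw [h, norm_zero] at this
  norm_num at this

lemma hnoneg_of {P : Set E3} (hunit : ∀ p ∈ P, ‖p‖ = 1) (hgen : GenPos P)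
    (hthird : ∀ a b : E3, ∃ r ∈ P, r ≠ a ∧ r ≠ b) : ∀ p ∈ P, -p ∉ P := by
  intro p hp hnp
  have hpne : p ≠ -p := by
    intro h
    have h0 : (2:ℝ) • p = 0 := by
      rw [two_smul]; nth_rewrite 2 [h]; exact add_neg_cancel p
    rcases smul_eq_zero.1 h0 with h1 | h1
    · norm_num at h1
    · exact pt_ne_zero hunit hp h1
  have h : (1:ℝ) • p + (1:ℝ) • (-p) = 0 := by simp
  have := (hrel2_of hgen hthird p hp (-p) hnp hpne 1 1 h).1
  norm_num at this

lemma sign_pt_inj {P : Set E3} (hunit : ∀ p ∈ P, ‖p‖ = 1) (hgen : GenPos P)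
    (hthird : ∀ a b : E3, ∃ r ∈ P, r ≠ a ∧ r ≠ b)
    {p q : E3} (hp : p ∈ P) (hq : q ∈ P) {ε δ : ℝ}
    (hε : ε = 1 ∨ ε = -1) (hδ : δ = 1 ∨ δ = -1) (h : ε • p = δ • q) : p = q ∧ ε = δ := by
  by_cases hpq : p = q
  · subst hpq
    refine ⟨rfl, ?_⟩
    have h2 : (ε - δ) • p = 0 := by rw [sub_smul, h, sub_self]
    rcases smul_eq_zero.1 h2 with h3 | h3
    · linarith [sub_eq_zero.1 (by linarith : ε - δ = 0)]
    · exact absurd h3 (pt_ne_zero hunit hp)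
  · exfalso
    have h2 : ε • p + (-δ) • q = 0 := by rw [neg_smul, h, add_neg_cancel]
    have := (hrel2_of hgen hthird p hp q hq hpq _ _ h2).1
    rcases hε with rfl | rfl <;> norm_num at this

lemma smul_mem_phat {P : Set E3} {p : E3} (hp : p ∈ P) {ε : ℝ} (hε : ε = 1 ∨ ε = -1) :
    ε • p ∈ phat P := by
  rcases hε with rfl | rfl
  · rw [one_smul]; exact Or.inl hp
  · rw [neg_one_smul]; exact Or.inr ⟨p, hp, rfl⟩

lemma phat_decomp {P : Set E3} {a : E3} (ha : a ∈ phat P) :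
    ∃ p ∈ P, ∃ ε : ℝ, (ε = 1 ∨ ε = -1) ∧ a = ε • p := by
  rcases ha with h | ⟨p, hp, hpa⟩
  · exact ⟨a, h, 1, Or.inl rfl, (one_smul ℝ a).symm⟩
  · exact ⟨p, hp, -1, Or.inr rfl, by rw [← hpa, neg_one_smul]⟩

lemma edge_decomp {V : Set E3} {e : Sym2 E3} (he : e ∈ edges V) {a b : E3}
    (heab : e = s(a, b)) : a ∈ V ∧ b ∈ V ∧ b ≠ a ∧ b ≠ -a := by
  obtain ⟨a₀, b₀, ha₀, hb₀, h1, h2, he2⟩ := he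
  rw [heab] at he2
  rcases Sym2.eq_iff.1 he2 with ⟨rfl, rfl⟩ | ⟨rfl, rfl⟩
  · exact ⟨ha₀, hb₀, h1, h2⟩
  · exact ⟨hb₀, ha₀, Ne.symm h1, fun h => h2 (by rw [h, neg_neg])⟩

lemma edge_pts {P : Set E3} (hunit : ∀ p ∈ P, ‖p‖ = 1) (hgen : GenPos P)
    (hthird : ∀ a b : E3, ∃ r ∈ P, r ≠ a ∧ r ≠ b)
    {x y x' y' : E3} (hx : x ∈ P) (hy : y ∈ P) (hx' : x' ∈ P) (hy' : y' ∈ P)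
    {α β α' β' : ℝ} (hα : α = 1 ∨ α = -1) (hβ : β = 1 ∨ β = -1)
    (hα' : α' = 1 ∨ α' = -1) (hβ' : β' = 1 ∨ β' = -1)
    (h : s(α • x, β • y) = s(α' • x', β' • y')) :
    (x = x' ∧ y = y') ∨ (x = y' ∧ y = x') := by
  rcases Sym2.eq_iff.1 h with ⟨h1, h2⟩ | ⟨h1, h2⟩
  · exact Or.inl ⟨(sign_pt_inj hunit hgen hthird hx hx' hα hα' h1).1,
      (sign_pt_inj hunit hgen hthird hy hy' hβ hβ' h2).1⟩
  · exact Or.inr ⟨(sign_pt_inj hunit hgen hthird hx hy' hα hβ' h1).1,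
      (sign_pt_inj hunit hgen hthird hy hx' hβ hα' h2).1⟩

lemma phi_neg_ne {P : Set E3} (hunit : ∀ p ∈ P, ‖p‖ = 1) (hgen : GenPos P)
    (hthird : ∀ a b : E3, ∃ r ∈ P, r ≠ a ∧ r ≠ b)
    {p q r s : E3} (hp : p ∈ P) (hq : q ∈ P) (hr : r ∈ P) (hs : s ∈ P)
    (hpq : p ≠ q) (hpr : p ≠ r) (hps : p ≠ s) (hqr : q ≠ r) (hqs : q ≠ s) (hrs : r ≠ s) :
    Phi4 q p r s ≠ Phi4 p q r s := by
  have hA := cA_ne (p := p) (hgen q hq r hr s hs hqr hqs hrs)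
  have hB := cB_ne (q := q) (hgen p hp r hr s hs hpr hps hrs)
  have hC := cC_ne (r := r) (hgen p hp q hq s hs hpq hps hqs)
  have hD := cD_ne (s := s) (hgen p hp q hq r hr hpq hpr hqr)
  rw [Phi4_neg hA hB hC hD]
  intro h
  rcases Sym2.eq_iff.1 h with ⟨h1, _⟩ | ⟨h1, _⟩
  · rcases Sym2.eq_iff.1 h1 with ⟨h2, _⟩ | ⟨h2, _⟩
    · have := (sign_pt_inj hunit hgen hthird hp hp (neg_pm (msign_one_or _))
        (msign_one_or _) h2).2
      rcases msign_one_or (cA p q r s) with hm | hm <;> rw [hm] at this <;> norm_num at this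
    · exact hpq (sign_pt_inj hunit hgen hthird hp hq (neg_pm (msign_one_or _))
        (msign_one_or _) h2).1
  · rcases Sym2.eq_iff.1 h1 with ⟨h2, _⟩ | ⟨h2, _⟩
    · exact hpr (sign_pt_inj hunit hgen hthird hp hr (neg_pm (msign_one_or _))
        (msign_one_or _) h2).1
    · exact hps (sign_pt_inj hunit hgen hthird hp hs (neg_pm (msign_one_or _))
        (msign_one_or _) h2).1

lemma fiber_classify {P : Set E3} (hunit : ∀ p ∈ P, ‖p‖ = 1) (hgen : GenPos P)
    (hthird : ∀ a b : E3, ∃ r ∈ P, r ≠ a ∧ r ≠ b)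
    {p q r s p' q' r' s' : E3}
    (hp : p ∈ P) (hq : q ∈ P) (hr : r ∈ P) (hs : s ∈ P)
    (hp' : p' ∈ P) (hq' : q' ∈ P) (hr' : r' ∈ P) (hs' : s' ∈ P)
    (hpq : p ≠ q) (hpr : p ≠ r) (hps : p ≠ s) (hqr : q ≠ r) (hqs : q ≠ s) (hrs : r ≠ s)
    (h : Phi4 p' q' r' s' = Phi4 p q r s) :
    (p' = p ∧ q' = q ∧ r' = r ∧ s' = s) ∨ (p' = q ∧ q' = p ∧ r' = s ∧ s' = r) ∨
    (p' = r ∧ q' = s ∧ r' = q ∧ s' = p) ∨ (p' = s ∧ q' = r ∧ r' = p ∧ s' = q) := by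
  have h0 := h
  have NE := phi_neg_ne hunit hgen hthird hp hq hr hs hpq hpr hps hqr hqs hrs
  unfold Phi4 at h0
  rcases Sym2.eq_iff.1 h0 with ⟨h1, h2⟩ | ⟨h1, h2⟩
  · rcases edge_pts hunit hgen hthird hp' hq' hp hq (msign_one_or _) (msign_one_or _)
        (msign_one_or _) (msign_one_or _) h1 with ⟨e1, e2⟩ | ⟨e1, e2⟩
    · rcases edge_pts hunit hgen hthird hr' hs' hr hs (msign_one_or _) (msign_one_or _)
          (msign_one_or _) (msign_one_or _) h2 with ⟨e3, e4⟩ | ⟨e3, e4⟩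
      · exact Or.inl ⟨e1, e2, e3, e4⟩
      · -- (p, q, s, r) : bad
        exfalso
        rw [e1, e2, e3, e4, Phi4_t2 q p r s] at h
        exact NE h
    · rcases edge_pts hunit hgen hthird hr' hs' hr hs (msign_one_or _) (msign_one_or _)
          (msign_one_or _) (msign_one_or _) h2 with ⟨e3, e4⟩ | ⟨e3, e4⟩
      · -- (q, p, r, s) : bad
        exfalso
        rw [e1, e2, e3, e4] at h
        exact NE h
      · exact Or.inr (Or.inl ⟨e1, e2, e3, e4⟩)
  · rcases edge_pts hunit hgen hthird hp' hq' hr hs (msign_one_or _) (msign_one_or _)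
        (msign_one_or _) (msign_one_or _) h1 with ⟨e1, e2⟩ | ⟨e1, e2⟩
    · rcases edge_pts hunit hgen hthird hr' hs' hp hq (msign_one_or _) (msign_one_or _)
          (msign_one_or _) (msign_one_or _) h2 with ⟨e3, e4⟩ | ⟨e3, e4⟩
      · -- (r, s, p, q) : bad
        exfalso
        rw [e1, e2, e3, e4, Phi4_t3 q p r s] at h
        exact NE h
      · exact Or.inr (Or.inr (Or.inl ⟨e1, e2, e3, e4⟩))
    · rcases edge_pts hunit hgen hthird hr' hs' hp hq (msign_one_or _) (msign_one_or _)
          (msign_one_or _) (msign_one_or _) h2 with ⟨e3, e4⟩ | ⟨e3, e4⟩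
      · exact Or.inr (Or.inr (Or.inr ⟨e1, e2, e3, e4⟩))
      · -- (s, r, q, p) : bad
        exfalso
        rw [e1, e2, e3, e4, Phi4_t4 q p r s] at h
        exact NE h

lemma mem_S_iff (P : Set E3) (hunit : ∀ p ∈ P, ‖p‖ = 1) (hgen : GenPos P)
    (hthird : ∀ a b : E3, ∃ r ∈ P, r ≠ a ∧ r ≠ b) (w : Sym2 (Sym2 E3)) :
    (∃ e ∈ edges (phat P), ∃ f ∈ edges (phat P), e ≠ f ∧
          (∃ a b c d, e = s(a, b) ∧ f = s(c, d) ∧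
            ∃ x, x ∈ arc a b ∩ arc c d ∧ x ∉ ({a, b, c, d} : Set E3)) ∧
          w = s(e, f)) ↔
    (∃ p, p ∈ P ∧ ∃ q, q ∈ P ∧ ∃ r, r ∈ P ∧ ∃ t, t ∈ P ∧
      (p ≠ q ∧ p ≠ r ∧ p ≠ t ∧ q ≠ r ∧ q ≠ t ∧ r ≠ t) ∧ w = Phi4 p q r t) := by
  constructor
  · rintro ⟨e, he, f, hf, hef, ⟨a, b, c, d, hea, hfc, x, ⟨hx1, hx2⟩, hxn⟩, rfl⟩
    obtain ⟨haP, hbP, hba, hbna⟩ := edge_decomp he hea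
    obtain ⟨hcP, hdP, hdc, hdnc⟩ := edge_decomp hf hfc
    obtain ⟨p, hpP, ε, hε, rfl⟩ := phat_decomp haP
    obtain ⟨q, hqP, δ, hδ, rfl⟩ := phat_decomp hbP
    obtain ⟨r, hrP, ε', hε', rfl⟩ := phat_decomp hcP
    obtain ⟨t, htP, δ', hδ', rfl⟩ := phat_decomp hdP
    simp only [Set.mem_insert_iff, Set.mem_singleton_iff] at hxn
    push_neg at hxn
    obtain ⟨hxa, hxb, hxc, hxd⟩ := hxn
    have hpq : p ≠ q := by
      rintro rfl
      rcases hε with rfl | rfl <;> rcases hδ with rfl | rfl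
      · exact hba rfl
      · exact hbna (by module)
      · exact hbna (by module)
      · exact hba rfl
    have hrt : r ≠ t := by
      rintro rfl
      rcases hε' with rfl | rfl <;> rcases hδ' with rfl | rfl
      · exact hdc rfl
      · exact hdnc (by module)
      · exact hdnc (by module)
      · exact hdc rfl
    by_cases hpr : p = r
    · subst hpr
      by_cases hqt : q = t
      · subst hqt
        have hedge : s(ε • p, δ • q) ≠ s(ε' • p, δ' • q) := by
          rw [hea, hfc] at hef; exact hef
        rcases shared_two (hunit p hpP) (hunit q hqP)
            (fun u v h => hrel2_of hgen hthird p hpP q hqP hpq u v h)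
            hε hδ hε' hδ' hx1 hx2 hedge with h | h | h | h
        exacts [absurd h hxa, absurd h hxb, absurd h hxc, absurd h hxd]
      · have h := shared_one (hunit p hpP)
          (fun A B C h => li3 (hgen p hpP q hqP t htP hpq hrt hqt) h)
          hε hδ hε' hδ' hx1 hx2
        exact absurd h hxa
    · by_cases hpt : p = t
      · by_cases hqr : q = r
        · -- p = t, q = r : reversed same classes
          rw [arc_comm] at hx2
          have hedge : s(ε • p, δ • q) ≠ s(δ' • p, ε' • q) := by
            rw [hea, hfc] at hef
            intro h
            exact hef (h.trans (Sym2.eq_swap.trans (by rw [hqr, hpt])))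
          rcases shared_two (hunit p hpP) (hunit q hqP)
              (fun u v h => hrel2_of hgen hthird p hpP q hqP hpq u v h)
              hε hδ hδ' hε' hx1 (by rw [hpt, hqr]; exact hx2) hedge with h | h | h | h
          · exact absurd h hxa
          · exact absurd h hxb
          · exact absurd (h.trans (by rw [hpt])) hxd
          · exact absurd (h.trans (by rw [hqr])) hxc
        · -- p = t only
          rw [arc_comm] at hx2
          have h := shared_one (hunit p hpP)
            (fun A B C h => li3 (hgen p hpP q hqP r hrP hpq hpr hqr) h)
            hε hδ hδ' hε' hx1 (by rw [← hpt] at hx2; exact hx2)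
          exact absurd h hxa
      · by_cases hqr : q = r
        · -- q = r only
          rw [arc_comm] at hx1
          have h := shared_one (hunit q hqP)
            (fun A B C h => li3 (hgen q hqP p hpP t htP (Ne.symm hpq) (hqr ▸ hrt) hpt) h)
            hδ hε hε' hδ' hx1 (by rw [← hqr] at hx2; exact hx2)
          exact absurd h hxb
        · by_cases hqt : q = t
          · -- q = t only
            rw [arc_comm] at hx1 hx2
            have h := shared_one (hunit q hqP)
              (fun A B C h => li3 (hgen q hqP p hpP r hrP (Ne.symm hpq) hqr hpr) h)
              hδ hε hδ' hε' hx1 (by rw [← hqt] at hx2; exact hx2)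
            exact absurd h hxb
          · -- all four classes distinct
            have L1 := hgen q hqP r hrP t htP hqr hqt hrt
            have L2 := hgen p hpP r hrP t htP hpr hpt hrt
            have L3 := hgen p hpP q hqP t htP hpq hpt hqt
            have L4 := hgen p hpP q hqP r hrP hpq hpr hqr
            obtain ⟨σ, hσ, h1, h2, h3, h4, -⟩ :=
              cross_classify L1 L2 L3 L4 hε hδ hε' hδ' hx1 hx2
            rcases hσ with rfl | rfl
            · refine ⟨p, hpP, q, hqP, r, hrP, t, htP, ⟨hpq, hpr, hpt, hqr, hqt, hrt⟩, ?_⟩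
              rw [hea, hfc]
              simp only [one_mul] at h1 h2 h3 h4
              rw [h1, h2, h3, h4]
              rfl
            · refine ⟨q, hqP, p, hpP, r, hrP, t, htP,
                ⟨Ne.symm hpq, hqr, hqt, hpr, hpt, hrt⟩, ?_⟩
              have hA := cA_ne (p := p) L1
              have hB := cB_ne (q := q) L2
              have hC := cC_ne (r := r) L3
              have hD := cD_ne (s := t) L4
              rw [hea, hfc, Phi4_neg hA hB hC hD]
              have h1' : ε = -msign (cA p q r t) := by rw [h1]; ring
              have h2' : δ = -msign (cB p q r t) := by rw [h2]; ring
              have h3' : ε' = -msign (cC p q r t) := by rw [h3]; ring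
              have h4' : δ' = -msign (cD p q r t) := by rw [h4]; ring
              rw [h1', h2', h3', h4']
  · rintro ⟨p, hpP, q, hqP, r, hrP, t, htP, ⟨hpq, hpr, hpt, hqr, hqt, hrt⟩, rfl⟩
    have L1 := hgen q hqP r hrP t htP hqr hqt hrt
    have L2 := hgen p hpP r hrP t htP hpr hpt hrt
    have L3 := hgen p hpP q hqP t htP hpq hpt hqt
    have L4 := hgen p hpP q hqP r hrP hpq hpr hqr
    have hA := cA_ne (p := p) L1
    have hB := cB_ne (q := q) L2
    have hC := cC_ne (r := r) L3
    have hD := cD_ne (s := t) L4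
    have hXne : Xv p q r t ≠ 0 := Xv_ne_zero L2 L3
    have hrelpq := hrel2_of hgen hthird p hpP q hqP hpq
    have hrelqp : ∀ u v : ℝ, u • q + v • p = 0 → u = 0 ∧ v = 0 := fun u v h =>
      let h' := hrelpq v u (by rwa [add_comm] at h)
      ⟨h'.2, h'.1⟩
    have hrelrt := hrel2_of hgen hthird r hrP t htP hrt
    have hreltr : ∀ u v : ℝ, u • t + v • r = 0 → u = 0 ∧ v = 0 := fun u v h =>
      let h' := hrelrt v u (by rwa [add_comm] at h)
      ⟨h'.2, h'.1⟩
    have hm1 := normalized_mem (Xv_eq p q r t) hXne (σ := 1) (Or.inl rfl)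
    have hm2 := normalized_mem (rfl : Xv p q r t = cC p q r t • r + cD p q r t • t) hXne
      (σ := 1) (Or.inl rfl)
    simp only [one_mul] at hm1 hm2
    have hne_a := xhat_ne_pt hB hrelpq (Xv_eq p q r t) hXne (σ := 1) one_ne_zero
      (msign (cA p q r t))
    have hne_b := xhat_ne_pt hA hrelqp ((Xv_eq p q r t).trans (add_comm _ _)) hXne
      (σ := 1) one_ne_zero (msign (cB p q r t))
    have hne_c := xhat_ne_pt hD hrelrt (rfl : Xv p q r t = _) hXne (σ := 1) one_ne_zero
      (msign (cC p q r t))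
    have hne_d := xhat_ne_pt hC hreltr ((rfl : Xv p q r t = _).trans (add_comm _ _)) hXne
      (σ := 1) one_ne_zero (msign (cD p q r t))
    simp only [one_mul] at hne_a hne_b hne_c hne_d
    refine ⟨s(msign (cA p q r t) • p, msign (cB p q r t) • q), ?_,
      s(msign (cC p q r t) • r, msign (cD p q r t) • t), ?_, ?_,
      ⟨msign (cA p q r t) • p, msign (cB p q r t) • q,
        msign (cC p q r t) • r, msign (cD p q r t) • t, rfl, rfl,
        ‖Xv p q r t‖⁻¹ • Xv p q r t, ⟨hm1, hm2⟩, ?_⟩, rfl⟩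
    · refine ⟨msign (cA p q r t) • p, msign (cB p q r t) • q,
        smul_mem_phat hpP (msign_one_or _), smul_mem_phat hqP (msign_one_or _), ?_, ?_, rfl⟩
      · intro h
        exact hpq ((sign_pt_inj hunit hgen hthird hqP hpP (msign_one_or _)
          (msign_one_or _) h).1).symm
      · intro h
        rw [← neg_smul] at h
        exact hpq ((sign_pt_inj hunit hgen hthird hqP hpP (msign_one_or _)
          (neg_pm (msign_one_or _)) h).1).symm
    · refine ⟨msign (cC p q r t) • r, msign (cD p q r t) • t,
        smul_mem_phat hrP (msign_one_or _), smul_mem_phat htP (msign_one_or _), ?_, ?_, rfl⟩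
      · intro h
        exact hrt ((sign_pt_inj hunit hgen hthird htP hrP (msign_one_or _)
          (msign_one_or _) h).1).symm
      · intro h
        rw [← neg_smul] at h
        exact hrt ((sign_pt_inj hunit hgen hthird htP hrP (msign_one_or _)
          (neg_pm (msign_one_or _)) h).1).symm
    · intro h
      rcases edge_pts hunit hgen hthird hpP hqP hrP htP (msign_one_or _) (msign_one_or _)
          (msign_one_or _) (msign_one_or _) h with ⟨h1, _⟩ | ⟨h1, _⟩
      · exact hpr h1
      · exact hpt h1
    · simp only [Set.mem_insert_iff, Set.mem_singleton_iff]
      push_neg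
      exact ⟨hne_a, hne_b, hne_c, hne_d⟩

variable {α : Type*} [DecidableEq α]

def D2 (G : Finset α) : Finset (α × α) := G.offDiag
def D3 (G : Finset α) : Finset (α × α × α) := G.biUnion fun a => {a} ×ˢ D2 (G.erase a)
def D4 (G : Finset α) : Finset (α × α × α × α) := G.biUnion fun a => {a} ×ˢ D3 (G.erase a)

lemma mem_D2 {G : Finset α} {x : α × α} : x ∈ D2 G ↔ x.1 ∈ G ∧ x.2 ∈ G ∧ x.1 ≠ x.2 :=
  Finset.mem_offDiag

lemma mem_D3 {G : Finset α} {x : α × α × α} :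
    x ∈ D3 G ↔ (x.1 ∈ G ∧ x.2.1 ∈ G ∧ x.2.2 ∈ G) ∧
      (x.1 ≠ x.2.1 ∧ x.1 ≠ x.2.2 ∧ x.2.1 ≠ x.2.2) := by
  rcases x with ⟨a, b, c⟩
  simp only [D3, D2, Finset.mem_biUnion, Finset.mem_product, Finset.mem_singleton,
    Finset.mem_offDiag, Finset.mem_erase]
  constructor
  · rintro ⟨a', ha', rfl, ⟨hb1, hb2⟩, ⟨hc1, hc2⟩, hbc⟩
    exact ⟨⟨ha', hb2, hc2⟩, ⟨Ne.symm hb1, Ne.symm hc1, hbc⟩⟩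
  · rintro ⟨⟨ha, hb, hc⟩, ⟨h1, h2, h3⟩⟩
    exact ⟨a, ha, rfl, ⟨Ne.symm h1, hb⟩, ⟨Ne.symm h2, hc⟩, h3⟩

lemma mem_D4 {G : Finset α} {x : α × α × α × α} :
    x ∈ D4 G ↔ (x.1 ∈ G ∧ x.2.1 ∈ G ∧ x.2.2.1 ∈ G ∧ x.2.2.2 ∈ G) ∧
      (x.1 ≠ x.2.1 ∧ x.1 ≠ x.2.2.1 ∧ x.1 ≠ x.2.2.2 ∧
        x.2.1 ≠ x.2.2.1 ∧ x.2.1 ≠ x.2.2.2 ∧ x.2.2.1 ≠ x.2.2.2) := by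
  rcases x with ⟨a, y⟩
  simp only [D4, Finset.mem_biUnion, Finset.mem_product, Finset.mem_singleton]
  constructor
  · rintro ⟨a', ha', rfl, hy⟩
    obtain ⟨⟨h1, h2, h3⟩, ⟨h4, h5, h6⟩⟩ := mem_D3.1 hy
    simp only [Finset.mem_erase] at h1 h2 h3
    exact ⟨⟨ha', h1.2, h2.2, h3.2⟩, ⟨Ne.symm h1.1, Ne.symm h2.1, Ne.symm h3.1, h4, h5, h6⟩⟩
  · rintro ⟨⟨ha, h1, h2, h3⟩, ⟨n1, n2, n3, n4, n5, n6⟩⟩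
    refine ⟨a, ha, rfl, mem_D3.2 ⟨⟨?_, ?_, ?_⟩, ⟨n4, n5, n6⟩⟩⟩ <;>
      simp only [Finset.mem_erase]
    · exact ⟨Ne.symm n1, h1⟩
    · exact ⟨Ne.symm n2, h2⟩
    · exact ⟨Ne.symm n3, h3⟩

lemma card_graded {β : Type*} [DecidableEq β] (G : Finset α) (W : α → Finset β) (m : ℕ)
    (hW : ∀ a ∈ G, (W a).card = m) :
    (G.biUnion fun a => {a} ×ˢ W a).card = G.card * m := by
  rw [Finset.card_biUnion]
  · rw [Finset.sum_congr rfl (fun a ha => by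
      rw [Finset.card_product, Finset.card_singleton, one_mul, hW a ha]),
      Finset.sum_const, smul_eq_mul]
  · intro x hx y hy hxy
    rw [Function.onFun, Finset.disjoint_left]
    intro z hz hz2
    simp only [Finset.mem_product, Finset.mem_singleton] at hz hz2
    exact hxy (hz.1.symm.trans hz2.1)

lemma nat_sq_sub (n : ℕ) : n * n - n = n * (n - 1) := by
  cases n with
  | zero => rfl
  | succ m => simp [Nat.succ_sub_one, Nat.mul_succ, Nat.succ_mul]

lemma card_D2 (G : Finset α) : (D2 G).card = G.card * (G.card - 1) := by
  rw [D2, Finset.offDiag_card, nat_sq_sub]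

lemma card_D3 (G : Finset α) : (D3 G).card = G.card * ((G.card - 1) * (G.card - 2)) := by
  rw [D3, card_graded G _ ((G.card - 1) * (G.card - 2)) (fun a ha => ?_)]
  rw [card_D2, Finset.card_erase_of_mem ha, show G.card - 1 - 1 = G.card - 2 from by omega]

lemma card_D4 (G : Finset α) :
    (D4 G).card = G.card * ((G.card - 1) * ((G.card - 2) * (G.card - 3))) := by
  rw [D4, card_graded G _ ((G.card - 1) * ((G.card - 2) * (G.card - 3))) (fun a ha => ?_)]
  rw [card_D3, Finset.card_erase_of_mem ha, show G.card - 1 - 1 = G.card - 2 from by omega,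
    show G.card - 1 - 2 = G.card - 3 from by omega]

def PhiT (t : E3 × E3 × E3 × E3) : Sym2 (Sym2 E3) := Phi4 t.1 t.2.1 t.2.2.1 t.2.2.2

end CrossAux

theorem count_crossing_pairs_of_arcs
    (k : ℕ) (hk : 3 ≤ k) (P : Set E3) (hPS : P ⊆ unitSphere)
    (hPfin : P.Finite) (hcard : P.ncard = k) (hgen : GenPos P) :
    (Set.ncard {pr : Sym2 (Sym2 E3) |
        ∃ e ∈ edges (phat P), ∃ f ∈ edges (phat P), e ≠ f ∧
          (∃ a b c d, e = s(a, b) ∧ f = s(c, d) ∧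
            ∃ x, x ∈ arc a b ∩ arc c d ∧ x ∉ ({a, b, c, d} : Set E3)) ∧
          pr = s(e, f)} : ℚ) =
      (k : ℚ) * ((k : ℚ) - 1) * ((k : ℚ) - 2) * ((k : ℚ) - 3) / 4 := by
  classical
  have hunit : ∀ p ∈ P, ‖p‖ = 1 := fun p hp => hPS hp
  have hthird : ∀ a b : E3, ∃ r ∈ P, r ≠ a ∧ r ≠ b := by
    intro a b
    by_contra h
    push_neg at h
    have hsub : P ⊆ {a, b} := by
      intro x hx
      rcases eq_or_ne x a with rfl | hxa
      · exact Set.mem_insert _ _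
      · exact Set.mem_insert_iff.2 (Or.inr (h x hx hxa))
    have h1 := Set.ncard_le_ncard hsub (Set.toFinite _)
    have h2 : ({a, b} : Set E3).ncard ≤ 2 := by
      apply (Set.ncard_insert_le a {b}).trans
      simp [Set.ncard_singleton]
    omega
  set F : Finset E3 := hPfin.toFinset with hF
  have hFmem : ∀ x : E3, x ∈ F ↔ x ∈ P := fun x => hPfin.mem_toFinset
  have hFcard : F.card = k := by rw [← hcard, Set.ncard_eq_toFinset_card _ hPfin]
  set Q : Finset (E3 × E3 × E3 × E3) := CrossAux.D4 F with hQ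
  set I : Finset (Sym2 (Sym2 E3)) := Q.image CrossAux.PhiT with hI
  have hSeq : {pr : Sym2 (Sym2 E3) |
        ∃ e ∈ edges (phat P), ∃ f ∈ edges (phat P), e ≠ f ∧
          (∃ a b c d, e = s(a, b) ∧ f = s(c, d) ∧
            ∃ x, x ∈ arc a b ∩ arc c d ∧ x ∉ ({a, b, c, d} : Set E3)) ∧
          pr = s(e, f)} = ↑I := by
    ext w
    simp only [Set.mem_setOf_eq, hI, Finset.coe_image, Set.mem_image, Finset.mem_coe]
    rw [CrossAux.mem_S_iff P hunit hgen hthird w]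
    constructor
    · rintro ⟨p, hp, q, hq, r, hr, t, ht, ⟨h1, h2, h3, h4, h5, h6⟩, rfl⟩
      exact ⟨(p, q, r, t), CrossAux.mem_D4.2 ⟨⟨(hFmem p).2 hp, (hFmem q).2 hq,
        (hFmem r).2 hr, (hFmem t).2 ht⟩, ⟨h1, h2, h3, h4, h5, h6⟩⟩, rfl⟩
    · rintro ⟨⟨p, q, r, t⟩, htQ, rfl⟩
      obtain ⟨⟨hp, hq, hr, ht⟩, hd⟩ := CrossAux.mem_D4.1 htQ
      exact ⟨p, (hFmem p).1 hp, q, (hFmem q).1 hq, r, (hFmem r).1 hr, t,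
        (hFmem t).1 ht, hd, rfl⟩
  have hfib : ∀ w ∈ I, (Q.filter fun t' => CrossAux.PhiT t' = w).card = 4 := by
    intro w hw
    obtain ⟨⟨p, q, r, t⟩, ht0, rfl⟩ := Finset.mem_image.1 hw
    obtain ⟨⟨hpF, hqF, hrF, htF⟩, ⟨hpq, hpr, hpt, hqr, hqt, hrt⟩⟩ := CrossAux.mem_D4.1 ht0
    have hpP := (hFmem p).1 hpF
    have hqP := (hFmem q).1 hqF
    have hrP := (hFmem r).1 hrF
    have htP := (hFmem t).1 htF
    have hfeq : Q.filter (fun t' => CrossAux.PhiT t' = CrossAux.PhiT (p, q, r, t)) =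
        {(p, q, r, t), (q, p, t, r), (r, t, q, p), (t, r, p, q)} := by
      ext t'
      simp only [Finset.mem_filter, Finset.mem_insert, Finset.mem_singleton]
      constructor
      · rintro ⟨ht'Q, hphi⟩
        obtain ⟨p', q', r', t'⟩ := t'
        obtain ⟨⟨hp'F, hq'F, hr'F, ht'F⟩, _⟩ := CrossAux.mem_D4.1 ht'Q
        rcases CrossAux.fiber_classify hunit hgen hthird hpP hqP hrP htP
            ((hFmem _).1 hp'F) ((hFmem _).1 hq'F) ((hFmem _).1 hr'F) ((hFmem _).1 ht'F)
            hpq hpr hpt hqr hqt hrt hphi with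
          ⟨e1, e2, e3, e4⟩ | ⟨e1, e2, e3, e4⟩ | ⟨e1, e2, e3, e4⟩ | ⟨e1, e2, e3, e4⟩
        · exact Or.inl (Prod.ext_iff.2 ⟨e1, Prod.ext_iff.2 ⟨e2, Prod.ext_iff.2 ⟨e3, e4⟩⟩⟩)
        · exact Or.inr (Or.inl (Prod.ext_iff.2 ⟨e1, Prod.ext_iff.2 ⟨e2, Prod.ext_iff.2 ⟨e3, e4⟩⟩⟩))
        · exact Or.inr (Or.inr (Or.inl (Prod.ext_iff.2 ⟨e1, Prod.ext_iff.2 ⟨e2, Prod.ext_iff.2 ⟨e3, e4⟩⟩⟩)))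
        · exact Or.inr (Or.inr (Or.inr (Prod.ext_iff.2 ⟨e1, Prod.ext_iff.2 ⟨e2, Prod.ext_iff.2 ⟨e3, e4⟩⟩⟩)))
      · rintro (rfl | rfl | rfl | rfl)
        · exact ⟨ht0, rfl⟩
        · exact ⟨CrossAux.mem_D4.2 ⟨⟨hqF, hpF, htF, hrF⟩,
            ⟨Ne.symm hpq, hqt, hqr, hpt, hpr, Ne.symm hrt⟩⟩, CrossAux.Phi4_t2 p q r t⟩
        · exact ⟨CrossAux.mem_D4.2 ⟨⟨hrF, htF, hqF, hpF⟩,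
            ⟨hrt, Ne.symm hqr, Ne.symm hpr, Ne.symm hqt, Ne.symm hpt, Ne.symm hpq⟩⟩,
            CrossAux.Phi4_t3 p q r t⟩
        · exact ⟨CrossAux.mem_D4.2 ⟨⟨htF, hrF, hpF, hqF⟩,
            ⟨Ne.symm hrt, Ne.symm hpt, Ne.symm hqt, Ne.symm hpr, Ne.symm hqr, hpq⟩⟩,
            CrossAux.Phi4_t4 p q r t⟩
    rw [hfeq]
    have c1 : ((p, q, r, t) : E3 × E3 × E3 × E3) ∉
        ({(q, p, t, r), (r, t, q, p), (t, r, p, q)} : Finset _) := by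
      simp [Prod.ext_iff, hpq, hpr, hpt]
    have c2 : ((q, p, t, r) : E3 × E3 × E3 × E3) ∉
        ({(r, t, q, p), (t, r, p, q)} : Finset _) := by
      simp [Prod.ext_iff, hqr, hqt]
    have c3 : ((r, t, q, p) : E3 × E3 × E3 × E3) ∉ ({(t, r, p, q)} : Finset _) := by
      simp [Prod.ext_iff, hrt]
    rw [Finset.card_insert_of_notMem c1, Finset.card_insert_of_notMem c2,
      Finset.card_insert_of_notMem c3, Finset.card_singleton]
  have hkey : Q.card = I.card * 4 := by
    rw [Finset.card_eq_sum_card_fiberwise (f := CrossAux.PhiT) (t := I)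
      (fun x hx => Finset.mem_image_of_mem _ hx)]
    rw [Finset.sum_congr rfl hfib, Finset.sum_const, smul_eq_mul]
  have hQcard : Q.card = k * ((k - 1) * ((k - 2) * (k - 3))) := by
    rw [hQ, CrossAux.card_D4, hFcard]
  rw [hSeq, Set.ncard_coe_finset]
  have e1 : ((k - 1 : ℕ) : ℚ) = (k : ℚ) - 1 := by
    rw [Nat.cast_sub (by omega : 1 ≤ k)]; norm_num
  have e2 : ((k - 2 : ℕ) : ℚ) = (k : ℚ) - 2 := by
    rw [Nat.cast_sub (by omega : 2 ≤ k)]; norm_num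
  have e3 : ((k - 3 : ℕ) : ℚ) = (k : ℚ) - 3 := by
    rw [Nat.cast_sub (by omega : 3 ≤ k)]; norm_num
  have h4 : (I.card : ℚ) * 4 = (k : ℚ) * (((k : ℚ) - 1) * (((k : ℚ) - 2) * ((k : ℚ) - 3))) := by
    have hnat : I.card * 4 = k * ((k - 1) * ((k - 2) * (k - 3))) := by rw [← hkey, hQcard]
    have hc := congrArg (fun n : ℕ => (n : ℚ)) hnat
    push_cast at hc
    rw [e1, e2, e3] at hc
    exact_mod_cast hc
  linear_combination h4 / 4
end
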